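/- The map ι : (w_0, w) ↦ ((1/4) w_0^{-1}, (1/2) w w_0^{-1}) is an involution of the subset {(w_0,w) ∈ H × H^{n-1} : tr w_0 > n(w)} of H × H^{n-1} (the Siegel domain of the quaternionic hyperbolic n-space): it maps the set to itself and ι ∘ ι = id. -/

import Mathlib

noncomputable section

open Quaternion

variable (n : ℕ)

/-- The Siegel domain `{(w₀,w) ∈ ℍ × ℍ^{n-1} : tr w₀ > n(w)}` of the quaternionic
hyperbolic `n`-space (here `tr w₀ = 2 Re w₀` and `n(w) = Σ_p n(w_p)`). -/
def SiegelDomain : Set (Quaternion ℝ × (Fin (n - 1) → Quaternion ℝ)) :=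
  {p | (∑ i, normSq (p.2 i)) < 2 * p.1.re}

/-- The map `ι : (w₀, w) ↦ ((1/4) w₀⁻¹, (1/2) w w₀⁻¹)`. -/
def siegelInv (p : Quaternion ℝ × (Fin (n - 1) → Quaternion ℝ)) :
    Quaternion ℝ × (Fin (n - 1) → Quaternion ℝ) :=
  ((4 : ℝ)⁻¹ • p.1⁻¹, fun i => (2 : ℝ)⁻¹ • (p.2 i * p.1⁻¹))

/-- The map `ι : (w₀,w) ↦ ((1/4) w₀⁻¹, (1/2) w w₀⁻¹)` is an involution of the Siegel
domain: it maps the Siegel domain to itself and `ι ∘ ι = id` there. -/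
theorem siegelInv_involution (hn : 2 ≤ n) :
    Set.MapsTo (siegelInv n) (SiegelDomain n) (SiegelDomain n) ∧
    ∀ p ∈ SiegelDomain n, siegelInv n (siegelInv n p) = p := by
  have key : ∀ p ∈ SiegelDomain n, p.1 ≠ 0 ∧ 0 < normSq p.1 ∧ 0 < p.1.re := by
    intro p hp
    have h0 : (0:ℝ) ≤ ∑ i, normSq (p.2 i) := Finset.sum_nonneg fun i _ => normSq_nonneg
    have hre : 0 < p.1.re := by
      have := hp; simp only [SiegelDomain, Set.mem_setOf_eq] at this; linarith
    have hne : p.1 ≠ 0 := by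
      intro h; rw [h] at hre; simp at hre
    exact ⟨hne, lt_of_le_of_ne normSq_nonneg (Ne.symm (normSq_ne_zero.2 hne)), hre⟩
  constructor
  · intro p hp
    obtain ⟨hne, hns, hre⟩ := key p hp
    have hp' : (∑ i, normSq (p.2 i)) < 2 * p.1.re := hp
    have hinv_re : (p.1⁻¹).re = (normSq p.1)⁻¹ * p.1.re := by
      rw [inv_def]; simp [re_smul]
    have hns_inv : normSq (p.1⁻¹) = (normSq p.1)⁻¹ := map_inv₀ normSq _
    show (∑ i, normSq ((2:ℝ)⁻¹ • (p.2 i * p.1⁻¹))) < 2 * ((4:ℝ)⁻¹ • p.1⁻¹).re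
    have hsum : (∑ i, normSq ((2:ℝ)⁻¹ • (p.2 i * p.1⁻¹)))
        = (4:ℝ)⁻¹ * (normSq p.1)⁻¹ * ∑ i, normSq (p.2 i) := by
      rw [Finset.mul_sum]
      refine Finset.sum_congr rfl fun i _ => ?_
      rw [normSq_smul, map_mul, hns_inv]; ring_nf
    rw [hsum, re_smul, hinv_re, smul_eq_mul]
    have hpos : (0:ℝ) < (4:ℝ)⁻¹ * (normSq p.1)⁻¹ := by positivity
    nlinarith [mul_lt_mul_of_pos_left hp' hpos]
  · intro p hp
    obtain ⟨hne, hns, hre⟩ := key p hp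
    have hinvne : p.1⁻¹ ≠ 0 := inv_ne_zero hne
    have hinv : ((4:ℝ)⁻¹ • p.1⁻¹)⁻¹ = (4:ℝ) • p.1 := by
      rw [smul_inv₀, inv_inv, inv_inv]
    have h1 : (siegelInv n (siegelInv n p)).1 = p.1 := by
      simp only [siegelInv, hinv, smul_smul]
      norm_num
    have h2 : (siegelInv n (siegelInv n p)).2 = p.2 := by
      funext i
      simp only [siegelInv, hinv]
      rw [smul_mul_assoc, mul_smul_comm, smul_smul, smul_smul, mul_assoc (p.2 i),
        inv_mul_cancel₀ hne, mul_one]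
      norm_num
    exact Prod.ext h1 h2
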